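/- Let f : (a,b) → ℝ be matrix monotone. Then f is continuous on (a,b). -/

import Mathlib

noncomputable def matrixApply {n : ℕ} (f : ℝ → ℝ) {A : Matrix (Fin n) (Fin n) ℝ}
    (hA : A.IsHermitian) : Matrix (Fin n) (Fin n) ℝ :=
  (hA.eigenvectorUnitary : Matrix (Fin n) (Fin n) ℝ) *
    Matrix.diagonal (fun i => f (hA.eigenvalues i)) *
    star (hA.eigenvectorUnitary : Matrix (Fin n) (Fin n) ℝ)

def MatrixMonotoneOn (f : ℝ → ℝ) (a b : ℝ) : Prop :=
  ∀ (n : ℕ) (A B : Matrix (Fin n) (Fin n) ℝ) (hA : A.IsHermitian) (hB : B.IsHermitian),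
    (∀ i, hA.eigenvalues i ∈ Set.Ioo a b) → (∀ i, hB.eigenvalues i ∈ Set.Ioo a b) →
    (B - A).PosSemidef → (matrixApply f hB - matrixApply f hA).PosSemidef

open Matrix Polynomial

lemma my_aeval_conj {n : ℕ} (g h N : Matrix (Fin n) (Fin n) ℝ) (hgh : g * h = 1) (hhg : h * g = 1)
    (Q : ℝ[X]) : aeval (g * N * h) Q = g * aeval N Q * h := by
  induction Q using Polynomial.induction_on' with
  | add p q hp hq => simp [hp, hq, Matrix.mul_add, Matrix.add_mul]
  | monomial k r =>
    have hpow : ∀ m : ℕ, (g * N * h) ^ m = g * N ^ m * h := by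
      intro m; induction m with
      | zero => simpa using hgh.symm
      | succ m ih =>
        rw [pow_succ, ih]
        calc g * N ^ m * h * (g * N * h) = g * N ^ m * (h * g) * (N * h) := by
              simp only [mul_assoc]
        _ = g * N ^ (m+1) * h := by rw [hhg, mul_one, pow_succ]; simp only [mul_assoc]
    rw [aeval_monomial, aeval_monomial, hpow, Algebra.algebraMap_eq_smul_one]
    simp [smul_mul_assoc, Matrix.mul_smul]

lemma my_aeval_diagonal {n : ℕ} (d : Fin n → ℝ) (Q : ℝ[X]) :
    aeval (Matrix.diagonal d) Q = Matrix.diagonal (fun i => Q.eval (d i)) := by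
  induction Q using Polynomial.induction_on' with
  | add p q hp hq => simp [hp, hq, Matrix.diagonal_add]
  | monomial k r =>
    rw [aeval_monomial, Matrix.diagonal_pow, Algebra.algebraMap_eq_smul_one]
    ext i j
    rcases eq_or_ne i j with rfl | hij
    · simp [Matrix.diagonal_apply_eq, smul_mul_assoc]
    · simp [Matrix.diagonal_apply_ne _ hij, smul_mul_assoc, Matrix.one_apply_ne hij]

lemma matrixApply_eq_aeval {n : ℕ} (f : ℝ → ℝ) {A : Matrix (Fin n) (Fin n) ℝ}
    (hA : A.IsHermitian) (P : ℝ[X])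
    (hP : ∀ i, P.eval (hA.eigenvalues i) = f (hA.eigenvalues i)) :
    matrixApply f hA = aeval A P := by
  have h1 : (hA.eigenvectorUnitary : Matrix (Fin n) (Fin n) ℝ) *
      star (hA.eigenvectorUnitary : Matrix (Fin n) (Fin n) ℝ) = 1 :=
    hA.eigenvectorUnitary.2.2
  have h2 : star (hA.eigenvectorUnitary : Matrix (Fin n) (Fin n) ℝ) *
      (hA.eigenvectorUnitary : Matrix (Fin n) (Fin n) ℝ) = 1 :=
    hA.eigenvectorUnitary.2.1
  have hspec := hA.spectral_theorem
  conv_rhs => rw [hspec]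
  rw [Unitary.conjStarAlgAut_apply, my_aeval_conj _ _ _ h1 h2, my_aeval_diagonal]
  have hd : Matrix.diagonal (fun i => P.eval ((RCLike.ofReal ∘ hA.eigenvalues : Fin n → ℝ) i))
      = Matrix.diagonal (fun i => f (hA.eigenvalues i)) := by
    exact congrArg Matrix.diagonal (funext fun i => by simp [hP i])
  rw [hd]; rfl

lemma eigenvalues_quad {n : ℕ} {A : Matrix (Fin n) (Fin n) ℝ} (hA : A.IsHermitian)
    (s t : ℝ) (h : (A - s • 1) * (A - t • 1) = 0) (i : Fin n) :
    hA.eigenvalues i = s ∨ hA.eigenvalues i = t := by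
  set v : Fin n → ℝ := ⇑(hA.eigenvectorBasis i) with hv
  have hmv : A *ᵥ v = hA.eigenvalues i • v := hA.mulVec_eigenvectorBasis i
  have hv0 : v ≠ 0 := by
    intro h0
    have := hA.eigenvectorBasis.orthonormal.ne_zero i
    apply this
    ext j
    exact congrFun h0 j
  have key : ((hA.eigenvalues i - s) * (hA.eigenvalues i - t)) • v = 0 := by
    have : ((A - s • 1) * (A - t • 1)) *ᵥ v = 0 := by rw [h, Matrix.zero_mulVec]
    rw [← Matrix.mulVec_mulVec] at this
    rw [Matrix.sub_mulVec, Matrix.sub_mulVec, hmv] at this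
    simp only [Matrix.smul_mulVec, Matrix.one_mulVec, Matrix.mulVec_smul, hmv,
      smul_smul, ← sub_smul, smul_sub] at this
    rw [← this]
    module
  rcases smul_eq_zero.mp key with hc | hc
  · rcases mul_eq_zero.mp hc with h' | h'
    · left; linarith [sub_eq_zero.mp h']
    · right; linarith [sub_eq_zero.mp h']
  · exact absurd hc hv0

lemma matrix_mono (a b : ℝ) (f : ℝ → ℝ) (hf : MatrixMonotoneOn f a b) :
    MonotoneOn f (Set.Ioo a b) := by
  intro x hx y hy hxy
  set A : Matrix (Fin 1) (Fin 1) ℝ := Matrix.diagonal (fun _ => x) with hAdef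
  set B : Matrix (Fin 1) (Fin 1) ℝ := Matrix.diagonal (fun _ => y) with hBdef
  have hA : A.IsHermitian := Matrix.isHermitian_diagonal _
  have hB : B.IsHermitian := Matrix.isHermitian_diagonal _
  have hAq : (A - x • 1) * (A - x • 1) = 0 := by
    have : A - x • 1 = 0 := by
      ext i j
      fin_cases i; fin_cases j
      simp [hAdef, Matrix.one_apply]
    rw [this, mul_zero]
  have hBq : (B - y • 1) * (B - y • 1) = 0 := by
    have : B - y • 1 = 0 := by
      ext i j
      fin_cases i; fin_cases j
      simp [hBdef, Matrix.one_apply]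
    rw [this, mul_zero]
  have hAev : ∀ i, hA.eigenvalues i = x := fun i => by
    rcases eigenvalues_quad hA x x hAq i with h | h <;> exact h
  have hBev : ∀ i, hB.eigenvalues i = y := fun i => by
    rcases eigenvalues_quad hB y y hBq i with h | h <;> exact h
  have hfA : matrixApply f hA = Matrix.diagonal (fun _ => f x) := by
    rw [matrixApply_eq_aeval f hA (Polynomial.C (f x)) (fun i => by simp [hAev i]), hAdef,
      my_aeval_diagonal]
    simp
  have hfB : matrixApply f hB = Matrix.diagonal (fun _ => f y) := by
    rw [matrixApply_eq_aeval f hB (Polynomial.C (f y)) (fun i => by simp [hBev i]), hBdef,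
      my_aeval_diagonal]
    simp
  have hBA : (B - A).PosSemidef := by
    have : B - A = Matrix.diagonal (fun _ => y - x) := by
      rw [hAdef, hBdef, Matrix.diagonal_sub]
    rw [this]
    exact Matrix.PosSemidef.diagonal (fun i => by simp [sub_nonneg.mpr hxy])
  have hPSD := hf 1 A B hA hB (fun i => by rw [hAev i]; exact hx)
    (fun i => by rw [hBev i]; exact hy) hBA
  have := hPSD.dotProduct_mulVec_nonneg ![1]
  rw [hfA, hfB] at this
  simp [dotProduct, Matrix.mulVec, Fin.sum_univ_one, Matrix.sub_apply,
    Matrix.diagonal_apply_eq] at this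
  linarith

set_option maxHeartbeats 2000000 in
lemma no_jump (a b c p q : ℝ) (f : ℝ → ℝ) (hf : MatrixMonotoneOn f a b)
    (hc : c ∈ Set.Ioo a b) (hpq : p < q)
    (h1 : ∀ t ∈ Set.Ioo a c, f t ≤ p) (h2 : ∀ t ∈ Set.Ioo c b, q ≤ f t)
    (h3 : ∀ γ > 0, ∃ x ∈ Set.Ioo a c, p - γ < f x) : False := by
  obtain ⟨hac, hcb⟩ := hc
  obtain ⟨x, hx, hfx⟩ := h3 ((q - p) / 2) (by linarith)
  obtain ⟨hax, hxc⟩ := hx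
  set e : ℝ := c - x with he_def
  have he : 0 < e := by simp [he_def]; linarith
  set K : ℝ := (b - c) / 2 with hK_def
  have hK : 0 < K := by simp [hK_def]; linarith
  have hden : (0:ℝ) < 3 * e + 3 * K + 1 := by linarith
  obtain ⟨η, hη, hmul⟩ : ∃ η : ℝ, 0 < η ∧ η * (3 * e + 3 * K + 1) = K * e :=
    ⟨K * e / (3 * e + 3 * K + 1), div_pos (mul_pos hK he) hden, by field_simp⟩
  have hηe : 3 * η < e := by nlinarith
  have hηK : 3 * η < K := by nlinarith
  set μ1 : ℝ := c - η with hμ1_def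
  set μ2 : ℝ := c + K with hμ2_def
  set y : ℝ := c + η with hy_def
  set Δ : ℝ := K + η with hΔ_def
  set A : Matrix (Fin 2) (Fin 2) ℝ := Matrix.diagonal ![y, x] with hAdef
  set B : Matrix (Fin 2) (Fin 2) ℝ := !![μ1 + Δ/2, Δ/2; Δ/2, μ1 + Δ/2] with hBdef
  have hA : A.IsHermitian := Matrix.isHermitian_diagonal _
  have hB : B.IsHermitian := by
    ext i j
    fin_cases i <;> fin_cases j <;>
      simp [hBdef, Matrix.conjTranspose_apply]
  have hAq : (A - y • 1) * (A - x • 1) = 0 := by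
    ext i j
    fin_cases i <;> fin_cases j <;>
      simp [hAdef, Matrix.mul_apply, Fin.sum_univ_two, Matrix.one_apply, Matrix.diagonal]
  have hBq : (B - μ1 • 1) * (B - μ2 • 1) = 0 := by
    ext i j
    fin_cases i <;> fin_cases j <;>
      simp [hBdef, hμ2_def, hμ1_def, hΔ_def, Matrix.mul_apply, Fin.sum_univ_two,
        Matrix.one_apply] <;> ring
  have hxIoo : x ∈ Set.Ioo a b := ⟨hax, by linarith⟩
  have hyIoo : y ∈ Set.Ioo a b := ⟨by simp [hy_def]; linarith, by simp [hy_def, hK_def] at *; linarith⟩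
  have hμ1Ioo : μ1 ∈ Set.Ioo a b := ⟨by simp [hμ1_def]; nlinarith, by simp [hμ1_def]; linarith⟩
  have hμ2Ioo : μ2 ∈ Set.Ioo a b := ⟨by simp [hμ2_def]; linarith, by simp [hμ2_def, hK_def]; linarith⟩
  have hAev : ∀ i, hA.eigenvalues i = y ∨ hA.eigenvalues i = x :=
    fun i => eigenvalues_quad hA y x hAq i
  have hBev : ∀ i, hB.eigenvalues i = μ1 ∨ hB.eigenvalues i = μ2 :=
    fun i => eigenvalues_quad hB μ1 μ2 hBq i
  -- PSD of B - A
  have hα : 0 ≤ K/2 - 3*η/2 := by linarith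
  have hγpos : 0 < e + K/2 - η/2 := by linarith
  have hdet : 0 ≤ (K/2 - 3*η/2) * (e + K/2 - η/2) - (Δ/2)^2 := by
    rw [hΔ_def]; nlinarith
  have hBA : (B - A).PosSemidef := by
    refine Matrix.PosSemidef.of_dotProduct_mulVec_nonneg (hB.sub hA) fun z => ?_
    have hform : star z ⬝ᵥ (B - A) *ᵥ z =
        (K/2 - 3*η/2) * (z 0)^2 + 2 * (Δ/2) * (z 0 * z 1) + (e + K/2 - η/2) * (z 1)^2 := by
      simp [hBdef, hAdef, hμ1_def, hΔ_def, hy_def, he_def, dotProduct, Matrix.mulVec,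
        Fin.sum_univ_two]
      ring
    rw [hform]
    have key : (e + K/2 - η/2) *
        ((K/2 - 3*η/2) * (z 0)^2 + 2 * (Δ/2) * (z 0 * z 1) + (e + K/2 - η/2) * (z 1)^2) =
        ((e + K/2 - η/2) * z 1 + (Δ/2) * z 0)^2 +
          ((K/2 - 3*η/2) * (e + K/2 - η/2) - (Δ/2)^2) * (z 0)^2 := by ring
    have hrhs : 0 ≤ (e + K/2 - η/2) *
        ((K/2 - 3*η/2) * (z 0)^2 + 2 * (Δ/2) * (z 0 * z 1) + (e + K/2 - η/2) * (z 1)^2) := by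
      rw [key]
      have := mul_nonneg hdet (sq_nonneg (z 0))
      have := sq_nonneg ((e + K/2 - η/2) * z 1 + (Δ/2) * z 0)
      linarith
    exact nonneg_of_mul_nonneg_right hrhs hγpos
  -- interpolating polynomial
  set s : Finset ℝ := {x, y, μ1, μ2} with hs_def
  set P : ℝ[X] := Lagrange.interpolate s id f with hP_def
  have hnode : ∀ t ∈ s, P.eval t = f t := by
    intro t ht
    have := Lagrange.eval_interpolate_at_node f (Set.injOn_id _) ht
    exact this
  have hxs : x ∈ s := by simp [hs_def]
  have hys : y ∈ s := by simp [hs_def]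
  have hμ1s : μ1 ∈ s := by simp [hs_def]
  have hμ2s : μ2 ∈ s := by simp [hs_def]
  have hfA : matrixApply f hA = Matrix.diagonal ![f y, f x] := by
    rw [matrixApply_eq_aeval f hA P (fun i => by
      rcases hAev i with h | h <;> rw [h] <;> [exact hnode y hys; exact hnode x hxs]),
      hAdef, my_aeval_diagonal]
    have hfun : (fun i => P.eval ((![y, x] : Fin 2 → ℝ) i)) = ![f y, f x] := by
      funext i
      fin_cases i
      · simpa using hnode y hys
      · simpa using hnode x hxs
    rw [hfun]
  set W : Matrix (Fin 2) (Fin 2) ℝ := !![1, 1; 1, -1] with hW_def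
  have hW1 : W * ((2:ℝ)⁻¹ • W) = 1 := by
    ext i j
    fin_cases i <;> fin_cases j <;>
      simp [hW_def, Matrix.mul_apply, Fin.sum_univ_two, Matrix.one_apply] <;> norm_num
  have hW2 : ((2:ℝ)⁻¹ • W) * W = 1 := by
    ext i j
    fin_cases i <;> fin_cases j <;>
      simp [hW_def, Matrix.mul_apply, Fin.sum_univ_two, Matrix.one_apply] <;> norm_num
  have hdiagμ : Matrix.diagonal ![μ2, μ1] = !![μ2, 0; 0, μ1] := by
    ext i j
    fin_cases i <;> fin_cases j <;> simp
  have hsmulW : (2:ℝ)⁻¹ • W = !![2⁻¹, 2⁻¹; 2⁻¹, -2⁻¹] := by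
    ext i j
    fin_cases i <;> fin_cases j <;> simp [hW_def]
  have hBdecomp : B = W * Matrix.diagonal ![μ2, μ1] * ((2:ℝ)⁻¹ • W) := by
    rw [hdiagμ, hsmulW, hW_def, hBdef]
    ext i j
    fin_cases i <;> fin_cases j <;>
      simp [Matrix.mul_apply, Fin.sum_univ_two, hμ1_def, hμ2_def, hΔ_def] <;> ring
  have hfB : matrixApply f hB = W * Matrix.diagonal ![f μ2, f μ1] * ((2:ℝ)⁻¹ • W) := by
    rw [matrixApply_eq_aeval f hB P (fun i => by
      rcases hBev i with h | h <;> rw [h] <;> [exact hnode μ1 hμ1s; exact hnode μ2 hμ2s])]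
    rw [hBdecomp, my_aeval_conj _ _ _ hW1 hW2, my_aeval_diagonal]
    have hfun : (fun i => P.eval ((![μ2, μ1] : Fin 2 → ℝ) i)) = ![f μ2, f μ1] := by
      funext i
      fin_cases i
      · simpa using hnode μ2 hμ2s
      · simpa using hnode μ1 hμ1s
    rw [hfun]
  have hPSD := hf 2 A B hA hB
    (fun i => by rcases hAev i with h | h <;> rw [h] <;> [exact hyIoo; exact hxIoo])
    (fun i => by rcases hBev i with h | h <;> rw [h] <;> [exact hμ1Ioo; exact hμ2Ioo]) hBA
  have hkey := hPSD.dotProduct_mulVec_nonneg ![1, -1]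
  rw [hfA, hfB] at hkey
  have hexp : star (![1, -1] : Fin 2 → ℝ) ⬝ᵥ
      (W * Matrix.diagonal ![f μ2, f μ1] * ((2:ℝ)⁻¹ • W) - Matrix.diagonal ![f y, f x]) *ᵥ ![1, -1]
      = 2 * f μ1 - f y - f x := by
    have hd1 : Matrix.diagonal ![f μ2, f μ1] = !![f μ2, 0; 0, f μ1] := by
      ext i j
      fin_cases i <;> fin_cases j <;> simp
    have hd2 : Matrix.diagonal ![f y, f x] = !![f y, 0; 0, f x] := by
      ext i j
      fin_cases i <;> fin_cases j <;> simp
    rw [hd1, hd2, hsmulW, hW_def]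
    simp [dotProduct, Matrix.mulVec, Matrix.mul_apply, Fin.sum_univ_two,
      Matrix.sub_apply]
    ring
  rw [hexp] at hkey
  have hfy : q ≤ f y := h2 y ⟨by simp [hy_def]; linarith, hyIoo.2⟩
  have hfμ1 : f μ1 ≤ p := h1 μ1 ⟨hμ1Ioo.1, by simp [hμ1_def]; linarith⟩
  linarith

theorem stmt15 (a b : ℝ) (f : ℝ → ℝ) (hf : MatrixMonotoneOn f a b) :
    ContinuousOn f (Set.Ioo a b) := by
  have hmono : MonotoneOn f (Set.Ioo a b) := matrix_mono a b f hf
  intro c hc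
  obtain ⟨hac, hcb⟩ := hc
  have hcIoo : c ∈ Set.Ioo a b := ⟨hac, hcb⟩
  apply ContinuousAt.continuousWithinAt
  set S1 : Set ℝ := f '' Set.Ioo a c with hS1_def
  set S2 : Set ℝ := f '' Set.Ioo c b with hS2_def
  have ne1 : S1.Nonempty := ⟨f ((a+c)/2), ⟨(a+c)/2, ⟨by linarith, by linarith⟩, rfl⟩⟩
  have ne2 : S2.Nonempty := ⟨f ((c+b)/2), ⟨(c+b)/2, ⟨by linarith, by linarith⟩, rfl⟩⟩
  have bdd1 : BddAbove S1 := by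
    refine ⟨f c, ?_⟩
    rintro _ ⟨t, ht, rfl⟩
    exact hmono ⟨ht.1, lt_trans ht.2 hcb⟩ hcIoo ht.2.le
  have bdd2 : BddBelow S2 := by
    refine ⟨f c, ?_⟩
    rintro _ ⟨t, ht, rfl⟩
    exact hmono hcIoo ⟨lt_trans hac ht.1, ht.2⟩ ht.1.le
  have hub : ∀ t ∈ Set.Ioo a c, f t ≤ sSup S1 := fun t ht => le_csSup bdd1 ⟨t, ht, rfl⟩
  have hlb : ∀ t ∈ Set.Ioo c b, sInf S2 ≤ f t := fun t ht => csInf_le bdd2 ⟨t, ht, rfl⟩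
  have hLle : sSup S1 ≤ f c := by
    apply csSup_le ne1
    rintro _ ⟨t, ht, rfl⟩
    exact hmono ⟨ht.1, lt_trans ht.2 hcb⟩ hcIoo ht.2.le
  have hRge : f c ≤ sInf S2 := by
    apply le_csInf ne2
    rintro _ ⟨t, ht, rfl⟩
    exact hmono hcIoo ⟨lt_trans hac ht.1, ht.2⟩ ht.1.le
  have hL : sSup S1 = f c := by
    refine le_antisymm hLle ?_
    by_contra hlt
    push_neg at hlt
    refine no_jump a b c (sSup S1) (f c) f hf hcIoo hlt hub
      (fun t ht => hmono hcIoo ⟨lt_trans hac ht.1, ht.2⟩ ht.1.le) ?_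
    intro γ hγ
    obtain ⟨v, hv, hvlt⟩ := exists_lt_of_lt_csSup ne1 (show sSup S1 - γ < sSup S1 by linarith)
    obtain ⟨t, ht, rfl⟩ := hv
    exact ⟨t, ht, hvlt⟩
  have hR : sInf S2 = f c := by
    refine le_antisymm ?_ hRge
    by_contra hlt
    push_neg at hlt
    refine no_jump a b c (f c) (sInf S2) f hf hcIoo hlt
      (fun t ht => hmono ⟨ht.1, lt_trans ht.2 hcb⟩ hcIoo ht.2.le) hlb ?_
    intro γ hγ
    obtain ⟨v, hv, hvlt⟩ := exists_lt_of_lt_csSup ne1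
      (show f c - γ < sSup S1 by rw [hL]; linarith)
    obtain ⟨t, ht, rfl⟩ := hv
    exact ⟨t, ht, hvlt⟩
  rw [Metric.continuousAt_iff]
  intro ε hε
  obtain ⟨v1, hv1, hv1lt⟩ := exists_lt_of_lt_csSup ne1
    (show f c - ε < sSup S1 by rw [hL]; linarith)
  obtain ⟨x, hx, rfl⟩ := hv1
  obtain ⟨v2, hv2, hv2lt⟩ := exists_lt_of_csInf_lt ne2
    (show sInf S2 < f c + ε by rw [hR]; linarith)
  obtain ⟨y, hy, rfl⟩ := hv2
  refine ⟨min (c - x) (y - c), by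
    apply lt_min <;> [linarith [hx.2]; linarith [hy.1]], ?_⟩
  intro t ht
  rw [Real.dist_eq] at ht
  rw [Real.dist_eq]
  have htx : x < t := by
    have h1 := abs_lt.mp ht
    have := min_le_left (c - x) (y - c)
    linarith [h1.1]
  have hty : t < y := by
    have h1 := abs_lt.mp ht
    have := min_le_right (c - x) (y - c)
    linarith [h1.2]
  have htIoo : t ∈ Set.Ioo a b := ⟨lt_trans hx.1 htx, lt_trans hty hy.2⟩
  have hxIoo : x ∈ Set.Ioo a b := ⟨hx.1, lt_trans hx.2 hcb⟩
  have hyIoo : y ∈ Set.Ioo a b := ⟨lt_trans hac hy.1, hy.2⟩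
  rcases le_total t c with htc | hct
  · have h1 : f x ≤ f t := hmono hxIoo htIoo htx.le
    have h2 : f t ≤ f c := hmono htIoo hcIoo htc
    rw [abs_lt]
    constructor <;> linarith
  · have h1 : f c ≤ f t := hmono hcIoo htIoo hct
    have h2 : f t ≤ f y := hmono htIoo hyIoo hty.le
    rw [abs_lt]
    constructor <;> linarith
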